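/- arXiv:2011.14074 — 8 statements merged into one kernel-verified Lean document; each statement's English description precedes it below -/
import Mathlib

section
/- If a graph G is strongly self-embeddable (i.e., for every vertex v, G embeds into G − v), then for every finite set V of vertices of G, the graph G − V contains a subgraph isomorphic to G. -/
open SimpleGraph

/-- `G` embeds into `H`: an injective graph homomorphism (not necessarily induced). -/
def EmbedsIn {α β : Type*} (G : SimpleGraph α) (H : SimpleGraph β) : Prop :=
  ∃ f : G →g H, Function.Injective f

/-- `G` is self-embeddable: it admits an injective adjacency-preserving self-map whose
image, as a subgraph, is a proper subgraph (strictly smaller edge set). -/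
def SelfEmbeddable {α : Type*} (G : SimpleGraph α) : Prop :=
  ∃ f : G →g G, Function.Injective f ∧ Sym2.map f '' G.edgeSet ⊂ G.edgeSet

/-- `G` is strongly self-embeddable: `G` embeds into `G - v` for every vertex `v`. -/
def StronglySelfEmbeddable {α : Type*} (G : SimpleGraph α) : Prop :=
  ∀ v : α, EmbedsIn G (G.induce ({v}ᶜ : Set α))

/-- The subgraph of `F` consisting of the edges with color `b` under coloring `c`. -/
def colorSubgraph {α : Type*} (F : SimpleGraph α) (c : Sym2 α → Bool) (b : Bool) :
    SimpleGraph α where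
  Adj x y := F.Adj x y ∧ c s(x, y) = b
  symm := by
    constructor
    intro x y h
    exact ⟨h.1.symm, by rw [Sym2.eq_swap]; exact h.2⟩
  loopless := by constructor; intro x h; exact F.irrefl h.1

/-- `F → (G, H)` : every red-blue coloring of the edges of `F` yields a red copy of `G`
or a blue copy of `H` (here `true` = red, `false` = blue). -/
def Arrows {α β γ : Type*} (F : SimpleGraph α) (G : SimpleGraph β) (H : SimpleGraph γ) : Prop :=
  ∀ c : Sym2 α → Bool,
    EmbedsIn G (colorSubgraph F c true) ∨ EmbedsIn H (colorSubgraph F c false)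

/-- `F` is `(G,H)`-minimal: it arrows `(G,H)` but no proper subgraph of it does. -/
def RamseyMinimal {α β γ : Type*} (F : SimpleGraph α) (G : SimpleGraph β)
    (H : SimpleGraph γ) : Prop :=
  Arrows F G H ∧ ∀ F' : SimpleGraph α, F' < F → ¬ Arrows F' G H

/-- `G` has no isolated vertices. -/
def NoIsolated {α : Type*} (G : SimpleGraph α) : Prop := ∀ v, ∃ w, G.Adj v w

/-- The single-edge graph `K₂`. -/
def K2 : SimpleGraph (Fin 2) := ⊤

/-- The matching `nK₂` with `n` pairwise disjoint edges. -/
def Matching (n : ℕ) : SimpleGraph (Fin n × Fin 2) where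
  Adj a b := a.1 = b.1 ∧ a.2 ≠ b.2
  symm := by constructor; intro a b h; exact ⟨h.1.symm, h.2.symm⟩
  loopless := by constructor; intro a h; exact h.2 rfl

/-- The disjoint union `nG` of `n` copies of `G`. -/
def nCopies {V : Type*} (n : ℕ) (G : SimpleGraph V) : SimpleGraph (Fin n × V) where
  Adj a b := a.1 = b.1 ∧ G.Adj a.2 b.2
  symm := by constructor; intro a b h; exact ⟨h.1.symm, h.2.symm⟩
  loopless := by constructor; intro a h; exact G.irrefl h.2

/-- The infinite star `S_∞ = K_{1,∞}`, with center `none`. -/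
def InfStar : SimpleGraph (Option ℕ) := SimpleGraph.fromRel (fun a _ => a = none)

/-- The finite star `K_{1,n}`, with center `none`. -/
def StarN (n : ℕ) : SimpleGraph (Option (Fin n)) := SimpleGraph.fromRel (fun a _ => a = none)

/-- The ray `P_∞` (one-way infinite path) on `ℕ`. -/
def Ray : SimpleGraph ℕ := SimpleGraph.fromRel (fun a b => b = a + 1)

/-- The `k`-ray `P_{k∞}`: `k` rays glued at a common endpoint `none`. -/
def kRay (k : ℕ) : SimpleGraph (Option (Fin k × ℕ)) :=
  SimpleGraph.fromRel (fun a b =>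
    (a = none ∧ ∃ i, b = some (i, 0)) ∨ (∃ i n, a = some (i, n) ∧ b = some (i, n + 1)))
lemma avoid_aux {V : Type} (G : SimpleGraph V) (h : StronglySelfEmbeddable G) :
    ∀ n : ℕ, ∀ S : Set V, S.Finite → S.ncard ≤ n →
      ∃ f : G →g G, Function.Injective f ∧ ∀ v, f v ∉ S := by
  intro n
  induction n with
  | zero =>
    intro S hfin hcard
    have : S = ∅ := Set.ncard_eq_zero hfin |>.mp (Nat.le_zero.mp hcard)
    exact ⟨SimpleGraph.Hom.id, fun a b hab => hab, by simp [this]⟩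
  | succ n ih =>
    intro S hfin hcard
    rcases S.eq_empty_or_nonempty with rfl | ⟨a, ha⟩
    · exact ⟨SimpleGraph.Hom.id, fun a b hab => hab, by simp⟩
    · obtain ⟨f, hfinj⟩ := h a
      -- g : G →g G avoiding a
      let g : G →g G := ⟨fun v => (f v).val, fun hab => f.map_adj hab⟩
      have hginj : Function.Injective g := fun x y hxy =>
        hfinj (Subtype.val_injective hxy)
      have hga : ∀ v, g v ≠ a := fun v => (f v).2
      set T : Set V := g ⁻¹' (S \ {a}) with hT
      have hTfin : T.Finite :=
        Set.Finite.preimage (Function.Injective.injOn hginj) hfin.diff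
      have hTcard : T.ncard ≤ n := by
        have h1 : T.ncard = (g '' T).ncard :=
          (Set.ncard_image_of_injective T hginj).symm
        have h2 : g '' T ⊆ S \ {a} := Set.image_preimage_subset _ _
        have h3 : (S \ {a}).ncard < S.ncard :=
          Set.ncard_diff_singleton_lt_of_mem ha hfin
        have := Set.ncard_le_ncard h2 hfin.diff
        omega
      obtain ⟨f', hf'inj, hf'⟩ := ih T hTfin hTcard
      refine ⟨g.comp f', hginj.comp hf'inj, fun v hv => ?_⟩
      by_cases hc : g (f' v) = a
      · exact hga (f' v) hc
      · exact hf' v (Set.mem_preimage.mpr ⟨hv, hc⟩)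

/-- If `G` is strongly self-embeddable, then `G - V` contains a copy of `G` for every
finite vertex set `V`. -/
theorem stmt0 {V : Type} (G : SimpleGraph V) (h : StronglySelfEmbeddable G) :
    ∀ S : Set V, S.Finite → EmbedsIn G (G.induce Sᶜ) := by
  intro S hfin
  obtain ⟨f, hfinj, hf⟩ := avoid_aux G h S.ncard S hfin le_rfl
  refine ⟨⟨fun v => ⟨f v, hf v⟩, fun hab => f.map_adj hab⟩, fun x y hxy => ?_⟩
  exact hfinj (congrArg Subtype.val hxy)
end

section
/- If a graph G is strongly self-embeddable, then for every finite set E of edges of G, the graph G − E contains a subgraph isomorphic to G. -/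
open SimpleGraph

lemma avoid_one {V : Type} (G : SimpleGraph V) (h : StronglySelfEmbeddable G) (v : V) :
    ∃ f : G →g G, Function.Injective f ∧ ∀ x, f x ≠ v := by
  obtain ⟨f, hf⟩ := h v
  refine ⟨⟨fun x => (f x).val, fun {a b} hab => (f.map_adj hab : _)⟩, ?_, ?_⟩
  · intro a b hab
    exact hf (Subtype.ext hab)
  · intro x hx
    exact (f x).2 hx

lemma avoid_set {V : Type} (G : SimpleGraph V) (h : StronglySelfEmbeddable G)
    (S : Set V) (hS : S.Finite) :
    ∃ f : G →g G, Function.Injective f ∧ ∀ x, f x ∉ S := by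
  induction S, hS using Set.Finite.induction_on with
  | empty => exact ⟨Hom.id, fun _ _ hab => hab, fun x => Set.notMem_empty _⟩
  | @insert a S ha hSfin ih =>
    obtain ⟨f, hfinj, hfS⟩ := ih
    by_cases hmem : a ∈ Set.range f
    · obtain ⟨u, hu⟩ := hmem
      obtain ⟨g, hginj, hgu⟩ := avoid_one G h u
      refine ⟨f.comp g, hfinj.comp hginj, fun x => ?_⟩
      simp only [Hom.comp_apply, Set.mem_insert_iff, not_or]
      refine ⟨fun heq => hgu x (hfinj (heq.trans hu.symm)), hfS _⟩
    · refine ⟨f, hfinj, fun x => ?_⟩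
      simp only [Set.mem_insert_iff, not_or]
      exact ⟨fun heq => hmem ⟨x, heq⟩, hfS x⟩

/-- If `G` is strongly self-embeddable, then `G - E` contains a copy of `G` for every
finite edge set `E`. -/
theorem stmt1 {V : Type} (G : SimpleGraph V) (h : StronglySelfEmbeddable G) :
    ∀ E : Set (Sym2 V), E.Finite → EmbedsIn G (G.deleteEdges E) := by
  intro E hE
  have hS : (⋃ e ∈ E, {x | x ∈ e}).Finite := by
    refine hE.biUnion fun e _ => ?_
    induction e using Sym2.ind with
    | _ a b =>
      have : {x | x ∈ s(a, b)} ⊆ {a, b} := by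
        intro x hx
        simpa [Sym2.mem_iff] using hx
      exact ((Set.finite_singleton b).insert a).subset this
  obtain ⟨f, hfinj, hfS⟩ := avoid_set G h _ hS
  refine ⟨⟨f, fun {x y} hxy => ?_⟩, hfinj⟩
  rw [SimpleGraph.deleteEdges_adj]
  refine ⟨f.map_adj hxy, fun hmem => ?_⟩
  exact hfS x (Set.mem_biUnion hmem (by simp))
end

section
/- For any graph G (with no isolated vertices), there exists a (G,K₂)-minimal graph if and only if G is not self-embeddable; moreover, if G is not self-embeddable, then G itself is the unique (G,K₂)-minimal graph up to isomorphism. -/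
open SimpleGraph

section Aux
variable {V W : Type} (G : SimpleGraph V)

lemma embedsIn_of_le {F F' : SimpleGraph W} (h : F ≤ F') (he : EmbedsIn G F) :
    EmbedsIn G F' := by
  obtain ⟨f, hf⟩ := he
  exact ⟨(SimpleGraph.Hom.ofLE h).comp f, hf⟩

lemma colorSubgraph_le (F : SimpleGraph W) (c : Sym2 W → Bool) (b : Bool) :
    colorSubgraph F c b ≤ F := fun _ _ h => h.1

lemma arrows_iff (F : SimpleGraph W) : Arrows F G K2 ↔ EmbedsIn G F := by
  constructor
  · intro h
    rcases h (fun _ => true) with h1 | h2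
    · exact embedsIn_of_le G (colorSubgraph_le F _ _) h1
    · exfalso
      obtain ⟨f, hf⟩ := h2
      have : (colorSubgraph F (fun _ => true) false).Adj (f 0) (f 1) := by
        exact f.map_rel (by simp [K2])
      simpa using this.2
  · rintro ⟨f, hf⟩ c
    by_cases hb : ∃ x y, F.Adj x y ∧ c s(x, y) = false
    · right
      obtain ⟨x, y, hxy, hc⟩ := hb
      refine ⟨⟨fun i => if i = 0 then x else y, ?_⟩, ?_⟩
      · intro a b hab
        fin_cases a <;> fin_cases b <;> simp_all [K2, colorSubgraph] <;>
          first
          | exact ⟨hxy, hc⟩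
          | exact ⟨hxy.symm, by rwa [Sym2.eq_swap]⟩
      · intro a b hab
        fin_cases a <;> fin_cases b <;>
          first
          | rfl
          | (exfalso; exact hxy.ne (by simpa using hab))
          | (exfalso; exact hxy.ne (by simpa using hab.symm))
    · left
      push_neg at hb
      refine ⟨⟨f, ?_⟩, hf⟩
      intro a b hab
      have hadj : F.Adj (f a) (f b) := f.map_rel hab
      refine ⟨hadj, ?_⟩
      have := hb (f a) (f b) hadj
      simpa using this

lemma ramseyMinimal_iff (F : SimpleGraph W) :
    RamseyMinimal F G K2 ↔ EmbedsIn G F ∧ ∀ F' : SimpleGraph W, F' < F → ¬ EmbedsIn G F' := by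
  unfold RamseyMinimal
  simp only [arrows_iff]

lemma edge_image_nondiag {F : SimpleGraph W} (h : G →g F) (hinj : Function.Injective h)
    {e : Sym2 V} (he : e ∈ G.edgeSet) : ¬ (Sym2.map h e).IsDiag := by
  induction e with
  | _ x y =>
    simp only [Sym2.map_pair_eq, Sym2.isDiag_iff_proj_eq]
    intro hxy
    exact (G.ne_of_adj he) (hinj hxy)

lemma key_edge_surj {F : SimpleGraph W} (hmin : RamseyMinimal F G K2) :
    ∃ h : G →g F, Function.Injective h ∧ Sym2.map h '' G.edgeSet = F.edgeSet := by
  rw [ramseyMinimal_iff] at hmin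
  obtain ⟨⟨h, hinj⟩, hm⟩ := hmin
  refine ⟨h, hinj, ?_⟩
  set s : Set (Sym2 W) := Sym2.map h '' G.edgeSet with hs
  have hsub : s ⊆ F.edgeSet := by
    rintro e ⟨e', he', rfl⟩
    induction e' with
    | _ x y => exact (SimpleGraph.mem_edgeSet _).2 (h.map_rel he')
  have hle : SimpleGraph.fromEdgeSet s ≤ F := by
    calc SimpleGraph.fromEdgeSet s ≤ SimpleGraph.fromEdgeSet F.edgeSet :=
          SimpleGraph.fromEdgeSet_mono hsub
      _ = F := SimpleGraph.fromEdgeSet_edgeSet F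
  have hemb : EmbedsIn G (SimpleGraph.fromEdgeSet s) := by
    refine ⟨⟨h, ?_⟩, hinj⟩
    intro a b hab
    rw [SimpleGraph.fromEdgeSet_adj]
    exact ⟨⟨s(a, b), (SimpleGraph.mem_edgeSet _).2 hab, Sym2.map_pair_eq h a b⟩,
      fun hc => (G.ne_of_adj hab) (hinj hc)⟩
  have heq : SimpleGraph.fromEdgeSet s = F := by
    by_contra hne
    exact hm _ (lt_of_le_of_ne hle hne) hemb
  have : (SimpleGraph.fromEdgeSet s).edgeSet = F.edgeSet := by rw [heq]
  rw [SimpleGraph.edgeSet_fromEdgeSet] at this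
  rw [← this]
  ext e
  simp only [Set.mem_diff, Set.mem_setOf_eq]
  refine ⟨fun he => ⟨he, ?_⟩, fun he => he.1⟩
  obtain ⟨e', he', rfl⟩ := he
  exact edge_image_nondiag G h hinj he'

end Aux

/-- A `(G,K₂)`-minimal graph exists iff `G` is not self-embeddable; in that case `G`
itself is `(G,K₂)`-minimal and is the unique minimal graph up to isomorphism. -/
theorem stmt9 {V : Type} (G : SimpleGraph V) (hni : NoIsolated G) :
    ((∃ (W : Type) (F : SimpleGraph W), RamseyMinimal F G K2) ↔ ¬ SelfEmbeddable G) ∧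
    (¬ SelfEmbeddable G →
      RamseyMinimal G G K2 ∧
      ∀ (W : Type) (F : SimpleGraph W), NoIsolated F → RamseyMinimal F G K2 →
        Nonempty (G ≃g F)) := by
  have main : ∀ (nse : ¬ SelfEmbeddable G), RamseyMinimal G G K2 := by
    intro nse
    rw [ramseyMinimal_iff]
    refine ⟨⟨SimpleGraph.Hom.id, fun a b h => h⟩, ?_⟩
    rintro F' hlt ⟨f, hf⟩
    apply nse
    refine ⟨(SimpleGraph.Hom.ofLE hlt.le).comp f, hf, ?_⟩
    have h1 : Sym2.map f '' G.edgeSet ⊆ F'.edgeSet := by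
      rintro e ⟨e', he', rfl⟩
      induction e' with
      | _ x y => exact (SimpleGraph.mem_edgeSet _).2 (f.map_rel he')
    have h2 : F'.edgeSet ⊂ G.edgeSet := SimpleGraph.edgeSet_ssubset_edgeSet.2 hlt
    exact lt_of_le_of_lt h1 h2
  have noMin : ∀ (se : SelfEmbeddable G) (W : Type) (F : SimpleGraph W),
      ¬ RamseyMinimal F G K2 := by
    rintro ⟨f, hfinj, hfim⟩ W F hmin
    obtain ⟨h, hinj, himg⟩ := key_edge_surj G hmin
    rw [ramseyMinimal_iff] at hmin
    -- consider F' = fromEdgeSet (Sym2.map h '' (Sym2.map f '' G.edgeSet))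
    set s : Set (Sym2 W) := Sym2.map h '' (Sym2.map f '' G.edgeSet) with hs
    have hsub : s ⊆ F.edgeSet := by
      rw [← himg]
      exact Set.image_mono hfim.subset
    have hle : SimpleGraph.fromEdgeSet s ≤ F := by
      calc SimpleGraph.fromEdgeSet s ≤ SimpleGraph.fromEdgeSet F.edgeSet :=
            SimpleGraph.fromEdgeSet_mono hsub
        _ = F := SimpleGraph.fromEdgeSet_edgeSet F
    obtain ⟨e₀, he₀G, he₀ni⟩ := Set.exists_of_ssubset hfim
    have hlt : SimpleGraph.fromEdgeSet s < F := by
      refine lt_of_le_of_ne hle ?_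
      intro heq
      have : Sym2.map h e₀ ∈ (SimpleGraph.fromEdgeSet s).edgeSet := by
        rw [heq, ← himg]; exact ⟨e₀, he₀G, rfl⟩
      rw [SimpleGraph.edgeSet_fromEdgeSet] at this
      obtain ⟨⟨e₁, he₁, heq₁⟩, -⟩ := this
      have he01 : e₁ = e₀ := Sym2.map.injective hinj heq₁
      exact he₀ni (he01 ▸ he₁)
    apply hmin.2 _ hlt
    refine ⟨⟨fun v => h (f v), ?_⟩, fun a b hab => hfinj (hinj hab)⟩
    intro a b hab
    rw [SimpleGraph.fromEdgeSet_adj]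
    refine ⟨⟨Sym2.map f s(a, b), ⟨s(a, b), (SimpleGraph.mem_edgeSet _).2 hab, rfl⟩, ?_⟩, ?_⟩
    · rw [Sym2.map_pair_eq, Sym2.map_pair_eq]
    · intro hc
      exact (G.ne_of_adj hab) (hfinj (hinj hc))
  constructor
  · constructor
    · rintro ⟨W, F, hF⟩ se
      exact noMin se W F hF
    · intro nse
      exact ⟨V, G, main nse⟩
  · intro nse
    refine ⟨main nse, ?_⟩
    intro W F hFni hmin
    obtain ⟨h, hinj, himg⟩ := key_edge_surj G hmin
    have hsurj : Function.Surjective h := by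
      intro w
      obtain ⟨w', hww'⟩ := hFni w
      have : s(w, w') ∈ F.edgeSet := (SimpleGraph.mem_edgeSet _).2 hww'
      rw [← himg] at this
      obtain ⟨e, heG, heq⟩ := this
      induction e with
      | _ x y =>
        rw [Sym2.map_pair_eq] at heq
        rcases Sym2.eq_iff.1 heq with ⟨h1, -⟩ | ⟨-, h2⟩
        · exact ⟨x, h1⟩
        · exact ⟨y, h2⟩
    refine ⟨⟨Equiv.ofBijective h ⟨hinj, hsurj⟩, ?_⟩⟩
    intro a b
    show F.Adj (h a) (h b) ↔ G.Adj a b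
    constructor
    · intro hab
      have : s(h a, h b) ∈ F.edgeSet := (SimpleGraph.mem_edgeSet _).2 hab
      rw [← himg] at this
      obtain ⟨e, heG, heq⟩ := this
      have : e = s(a, b) := by
        apply Sym2.map.injective hinj
        rw [heq, Sym2.map_pair_eq]
      rw [this] at heG
      exact (SimpleGraph.mem_edgeSet _).1 heG
    · intro hab
      exact h.map_rel hab
end

section
/- Let G and H be graphs with H ≠ K₂ (H has at least two edges). If G → (G,H), then there is no (G,H)-minimal graph. -/
open SimpleGraph

lemma adj_of_edge {γ : Type*} (H : SimpleGraph γ) {e : Sym2 γ} (he : e ∈ H.edgeSet) :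
    ∃ u v, H.Adj u v := by
  induction e using Sym2.ind with
  | _ u v => exact ⟨u, v, (SimpleGraph.mem_edgeSet H).mp he⟩

lemma arrows_of_embeds {α β γ : Type*} {F : SimpleGraph α} {G : SimpleGraph β}
    {H : SimpleGraph γ} (h : EmbedsIn G F) (harr : Arrows G G H) : Arrows F G H := by
  obtain ⟨f, hf⟩ := h
  intro c
  rcases harr (fun e => c (Sym2.map f e)) with ⟨g, hg⟩ | ⟨g, hg⟩
  · left
    refine ⟨⟨fun x => f (g x), fun {x y} hxy => ?_⟩, hf.comp hg⟩
    have h2 := g.map_rel hxy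
    refine ⟨f.map_rel h2.1, ?_⟩
    have := h2.2
    simpa using this
  · right
    refine ⟨⟨fun x => f (g x), fun {x y} hxy => ?_⟩, hf.comp hg⟩
    have h2 := g.map_rel hxy
    refine ⟨f.map_rel h2.1, ?_⟩
    have := h2.2
    simpa using this

/-- If `H ≠ K₂` (i.e. `H` has at least two edges) and `G → (G,H)`, then there is no
`(G,H)`-minimal graph. -/
theorem stmt10 {β γ : Type} [Nonempty β] (G : SimpleGraph β) (H : SimpleGraph γ)
    (hG : NoIsolated G)
    (hH : ∃ e₁ e₂ : Sym2 γ, e₁ ∈ H.edgeSet ∧ e₂ ∈ H.edgeSet ∧ e₁ ≠ e₂)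
    (harr : Arrows G G H) :
    ∀ (W : Type) (F : SimpleGraph W), ¬ RamseyMinimal F G H := by
  classical
  intro W F hmin
  obtain ⟨harrF, hminF⟩ := hmin
  obtain ⟨e₁, e₂, he₁, he₂, hne⟩ := hH
  obtain ⟨v₀⟩ := ‹Nonempty β›
  obtain ⟨w₀, hvw⟩ := hG v₀
  -- Step 1: all-red coloring gives a copy of G in F
  have hred : EmbedsIn G (colorSubgraph F (fun _ => true) true) := by
    rcases harrF (fun _ => true) with h | ⟨g, hg⟩
    · exact h
    · exfalso
      obtain ⟨u, v, hadj⟩ := adj_of_edge H he₁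
      have := (g.map_rel hadj).2
      simp at this
  obtain ⟨f, hf⟩ := hred
  have hfF : ∀ {a b : β}, G.Adj a b → F.Adj (f a) (f b) := fun h => (f.map_rel h).1
  -- F₁ := image of G in F
  set F₁ : SimpleGraph W := G.map ⇑f with hF₁
  have hle : F₁ ≤ F := by
    rintro x y ⟨-, a, b, hab, rfl, rfl⟩
    exact hfF hab
  have hemb : EmbedsIn G F₁ := by
    refine ⟨⟨fun a => f a, fun {a b} hab => ?_⟩, hf⟩
    exact ⟨hf.ne (G.ne_of_adj hab), a, b, hab, rfl, rfl⟩
  have hnotlt : ¬ F₁ < F := fun h => hminF F₁ h (arrows_of_embeds hemb harr)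
  have hEq : F₁ = F := hle.lt_or_eq.resolve_left hnotlt
  -- Step 2: color the edge s(f v₀, f w₀) blue, everything else red
  set e₀ : Sym2 W := s(f v₀, f w₀) with he₀
  have he₀F : F.Adj (f v₀) (f w₀) := hfF hvw
  set c₂ : Sym2 W → Bool := fun e => !decide (e = e₀) with hc₂
  rcases harrF c₂ with ⟨g, hg⟩ | ⟨g, hg⟩
  · -- red copy of G avoiding e₀
    set F₂ : SimpleGraph W := G.map ⇑g with hF₂
    have hgF : ∀ {a b : β}, G.Adj a b → F.Adj (g a) (g b) := fun h => (g.map_rel h).1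
    have hle₂ : F₂ ≤ F := by
      rintro x y ⟨-, a, b, hab, rfl, rfl⟩
      exact hgF hab
    have hne₂ : F₂ ≠ F := by
      intro h
      have hadj₂ : F₂.Adj (f v₀) (f w₀) := by rw [h]; exact he₀F
      obtain ⟨-, a, b, hab, ha, hb⟩ := hadj₂
      have hc := (g.map_rel hab).2
      rw [ha, hb] at hc
      simp [hc₂, he₀] at hc
    have hemb₂ : EmbedsIn G F₂ := by
      refine ⟨⟨fun a => g a, fun {a b} hab => ?_⟩, hg⟩
      exact ⟨hg.ne (G.ne_of_adj hab), a, b, hab, rfl, rfl⟩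
    exact hminF F₂ (lt_of_le_of_ne hle₂ hne₂) (arrows_of_embeds hemb₂ harr)
  · -- blue copy of H in a single edge: contradiction
    have key : ∀ e, e ∈ H.edgeSet → Sym2.map g e = e₀ := fun e =>
      Sym2.ind (f := fun e => e ∈ H.edgeSet → Sym2.map g e = e₀)
        (fun u v he => by
          have hadj : H.Adj u v := (SimpleGraph.mem_edgeSet H).mp he
          have hc := (g.map_rel hadj).2
          simp only [hc₂, Bool.not_eq_false', decide_eq_true_eq] at hc
          simpa using hc) e
    have h1 := key e₁ he₁
    have h2 := key e₂ he₂
    exact hne (Sym2.map.injective hg (h1.trans h2.symm))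
end

section
/- For every graph H, the countably infinite complete graph K_∞ satisfies K_∞ → (K_∞, H), and there is no (K_∞, H)-minimal graph. -/
open SimpleGraph

section Aux

lemma pigeon (S : Set ℕ) (hS : S.Infinite) (f : ℕ → Bool) :
    ∃ b, {x ∈ S | f x = b}.Infinite := by
  by_contra h
  push_neg at h
  have hsub : S ⊆ {x ∈ S | f x = true} ∪ {x ∈ S | f x = false} := by
    intro x hx
    cases hb : f x
    · exact Or.inr ⟨hx, hb⟩
    · exact Or.inl ⟨hx, hb⟩
  exact hS (((h true).union (h false)).subset hsub)

lemma ramsey_step (c : Sym2 ℕ → Bool) (S : Set ℕ) (hS : S.Infinite) :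
    ∃ a ∈ S, ∃ b, ∃ T : Set ℕ, T.Infinite ∧ T ⊆ S ∧ a ∉ T ∧ ∀ x ∈ T, c s(a, x) = b := by
  obtain ⟨a, ha⟩ := hS.nonempty
  have h2 : (S \ {a}).Infinite := hS.diff (Set.finite_singleton a)
  obtain ⟨b, hb⟩ := pigeon _ h2 (fun x => c s(a, x))
  refine ⟨a, ha, b, {x ∈ S \ {a} | c s(a, x) = b}, hb, fun x hx => hx.1.1, ?_, fun x hx => hx.2⟩
  intro h
  exact h.1.2 rfl

/-- Infinite Ramsey theorem for pairs with two colors. -/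
lemma ramsey2 (c : Sym2 ℕ → Bool) :
    ∃ (A : Set ℕ) (b : Bool), A.Infinite ∧ ∀ u ∈ A, ∀ v ∈ A, u ≠ v → c s(u, v) = b := by
  have key : ∀ S : {S : Set ℕ // S.Infinite}, ∃ p : ℕ × Bool × {T : Set ℕ // T.Infinite},
      p.1 ∈ S.1 ∧ p.2.2.1 ⊆ S.1 ∧ p.1 ∉ p.2.2.1 ∧ ∀ x ∈ p.2.2.1, c s(p.1, x) = p.2.1 := by
    rintro ⟨S, hS⟩
    obtain ⟨a, ha, b, T, hTinf, hTS, haT, hcol⟩ := ramsey_step c S hS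
    exact ⟨⟨a, b, ⟨T, hTinf⟩⟩, ha, hTS, haT, hcol⟩
  choose f hf1 hf2 hf3 hf4 using key
  let st : ℕ → {S : Set ℕ // S.Infinite} :=
    fun k => Nat.rec ⟨Set.univ, Set.infinite_univ⟩ (fun _ S => (f S).2.2) k
  let a : ℕ → ℕ := fun k => (f (st k)).1
  let b : ℕ → Bool := fun k => (f (st k)).2.1
  have hst : ∀ k, st (k + 1) = (f (st k)).2.2 := fun k => rfl
  have ha_mem : ∀ k, a k ∈ (st k).1 := fun k => hf1 (st k)
  have hsub : ∀ k, (st (k + 1)).1 ⊆ (st k).1 := fun k => hf2 (st k)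
  have hnot : ∀ k, a k ∉ (st (k + 1)).1 := fun k => hf3 (st k)
  have hcol : ∀ k, ∀ x ∈ (st (k + 1)).1, c s(a k, x) = b k := fun k => hf4 (st k)
  have hmono : ∀ j k, j ≤ k → (st k).1 ⊆ (st j).1 := by
    intro j k hjk
    induction k with
    | zero => simp_all
    | succ n ih =>
      rcases Nat.lt_or_ge j (n + 1) with h | h
      · exact (hsub n).trans (ih (Nat.lt_succ_iff.mp h))
      · have : j = n + 1 := le_antisymm hjk h
        subst this; exact fun x hx => hx
  have hlt : ∀ j k, j < k → a k ∈ (st (j + 1)).1 := by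
    intro j k h
    exact hmono (j + 1) k h (ha_mem k)
  have hc2 : ∀ j k, j < k → c s(a j, a k) = b j := fun j k h => hcol j _ (hlt j k h)
  have hane : ∀ j k, j < k → a j ≠ a k := by
    intro j k h heq
    exact hnot j (heq ▸ hlt j k h)
  obtain ⟨β, hβ⟩ := pigeon Set.univ Set.infinite_univ b
  refine ⟨a '' {x ∈ Set.univ | b x = β}, β, ?_, ?_⟩
  · refine hβ.image ?_
    intro j hj k hk heq
    by_contra hne
    rcases lt_trichotomy j k with h | h | h
    · exact hane j k h heq
    · exact hne h
    · exact hane k j h heq.symm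
  · rintro u ⟨j, hj, rfl⟩ v ⟨k, hk, rfl⟩ hne
    rcases lt_trichotomy j k with h | h | h
    · rw [hc2 j k h, hj.2]
    · exact absurd (by rw [h]) hne
    · rw [Sym2.eq_swap, hc2 k j h, hk.2]

end Aux

/-- `K_∞ → (K_∞, H)` for every (countable) graph `H`, and there is no
`(K_∞, H)`-minimal graph. -/
theorem stmt13 {W : Type} [Countable W] [Nonempty W] (H : SimpleGraph W)
    (hH : NoIsolated H) :
    Arrows (⊤ : SimpleGraph ℕ) (⊤ : SimpleGraph ℕ) H ∧
    ∀ (U : Type) (F : SimpleGraph U), ¬ RamseyMinimal F (⊤ : SimpleGraph ℕ) H := by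
  classical
  have part1 : Arrows (⊤ : SimpleGraph ℕ) (⊤ : SimpleGraph ℕ) H := by
    intro c
    obtain ⟨A, b, hAinf, hA⟩ := ramsey2 c
    cases b with
    | true =>
      left
      let e := hAinf.natEmbedding
      refine ⟨⟨fun n => (e n : ℕ), ?_⟩, ?_⟩
      · intro x y hxy
        have hx : x ≠ y := hxy
        have hne : (e x : ℕ) ≠ (e y : ℕ) := fun h =>
          hx (e.injective (Subtype.coe_injective h))
        exact ⟨hne, hA _ (e x).2 _ (e y).2 hne⟩
      · intro x y h
        exact e.injective (Subtype.coe_injective h)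
    | false =>
      right
      obtain ⟨g, hg⟩ := Countable.exists_injective_nat W
      let e := hAinf.natEmbedding
      refine ⟨⟨fun w => (e (g w) : ℕ), ?_⟩, ?_⟩
      · intro x y hxy
        have hx : x ≠ y := H.ne_of_adj hxy
        have hne : (e (g x) : ℕ) ≠ (e (g y) : ℕ) := fun h =>
          hx (hg (e.injective (Subtype.coe_injective h)))
        exact ⟨hne, hA _ (e (g x)).2 _ (e (g y)).2 hne⟩
      · intro x y h
        exact hg (e.injective (Subtype.coe_injective h))
  refine ⟨part1, ?_⟩
  rintro U F ⟨hArr, hMin⟩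
  -- `F` has an edge
  obtain ⟨p, q, hpq⟩ : ∃ p q, F.Adj p q := by
    rcases hArr (fun _ => true) with ⟨f, hf⟩ | ⟨f, hf⟩
    · exact ⟨f 0, f 1, (f.map_rel (by simp : (⊤ : SimpleGraph ℕ).Adj 0 1)).1⟩
    · obtain ⟨v⟩ := ‹Nonempty W›
      obtain ⟨w, hw⟩ := hH v
      exact ⟨f v, f w, (f.map_rel hw).1⟩
  set F' := F.deleteEdges {s(p, q)} with hF'
  have hlt : F' < F := by
    refine lt_of_le_of_ne (SimpleGraph.deleteEdges_le _) ?_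
    intro h
    have : F'.Adj p q := h ▸ hpq
    rw [hF', SimpleGraph.deleteEdges_adj] at this
    exact this.2 (Set.mem_singleton _)
  refine hMin F' hlt ?_
  intro c
  set c' : Sym2 U → Bool := fun s => if s = s(p, q) then true else c s with hc'
  have hc'ne : ∀ s, s ≠ s(p, q) → c' s = c s := fun s h => if_neg h
  have hc'eq : c' s(p, q) = true := if_pos rfl
  rcases hArr c' with ⟨f, hf⟩ | ⟨f, hf⟩
  · left
    have hfin : {n : ℕ | f n = p ∨ f n = q}.Finite := by
      have : {n : ℕ | f n = p ∨ f n = q} = f ⁻¹' {p, q} := by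
        ext n; simp [Set.mem_preimage]
      rw [this]
      exact Set.Finite.preimage hf.injOn ((Set.finite_singleton q).insert p)
    have hinf : ({n : ℕ | f n = p ∨ f n = q}ᶜ).Infinite := hfin.infinite_compl
    let e := hinf.natEmbedding
    have hmem : ∀ n, f (e n : ℕ) ≠ p ∧ f (e n : ℕ) ≠ q := by
      intro n
      have := (e n).2
      simp only [Set.mem_compl_iff, Set.mem_setOf_eq] at this
      exact ⟨fun h => this (Or.inl h), fun h => this (Or.inr h)⟩
    refine ⟨⟨fun n => f (e n : ℕ), ?_⟩, ?_⟩
    · intro x y hxy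
      have hx : x ≠ y := hxy
      have hne : f (e x : ℕ) ≠ f (e y : ℕ) := fun h =>
        hx (e.injective (Subtype.coe_injective (hf h)))
      have hadj : (colorSubgraph F c' true).Adj (f (e x : ℕ)) (f (e y : ℕ)) :=
        f.map_rel (by simpa using fun h => hx (e.injective (Subtype.coe_injective h)))
      have hns : s(f (e x : ℕ), f (e y : ℕ)) ≠ s(p, q) := by
        intro h
        rcases Sym2.eq_iff.mp h with ⟨h1, _⟩ | ⟨h1, _⟩
        · exact (hmem x).1 h1
        · exact (hmem x).2 h1
      have hcval : c s(f (e x : ℕ), f (e y : ℕ)) = true := by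
        have h2 := hadj.2
        rwa [hc'ne _ hns] at h2
      exact ⟨by rw [hF', SimpleGraph.deleteEdges_adj]; exact ⟨hadj.1, fun h => hns h⟩, hcval⟩
    · intro x y h
      exact e.injective (Subtype.coe_injective (hf h))
  · right
    refine ⟨⟨fun w => f w, ?_⟩, hf⟩
    intro x y hxy
    have hadj : (colorSubgraph F c' false).Adj (f x) (f y) := f.map_rel hxy
    have hns : s(f x, f y) ≠ s(p, q) := by
      intro h
      have h2 := hadj.2
      rw [h, hc'eq] at h2
      exact Bool.noConfusion h2
    have hcval : c s(f x, f y) = false := by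
      have h2 := hadj.2
      rwa [hc'ne _ hns] at h2
    exact ⟨by rw [hF', SimpleGraph.deleteEdges_adj]; exact ⟨hadj.1, fun h => hns h⟩, hcval⟩
end

section
/- If G is strongly self-embeddable, then G → (G, nK₂) for every n ≥ 1: every red-blue coloring of the edges of G with no n pairwise disjoint blue edges admits a red copy of G. -/
open SimpleGraph

lemma avoid1 {V : Type} (G : SimpleGraph V) (h : StronglySelfEmbeddable G) (v : V) :
    ∃ g : G →g G, Function.Injective g ∧ ∀ x, g x ≠ v := by
  obtain ⟨f, hf⟩ := h v
  refine ⟨⟨fun x => (f x : V), fun {x y} hadj => f.map_adj hadj⟩, ?_, ?_⟩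
  · intro a b hab
    exact hf (Subtype.ext hab)
  · exact fun x => (f x).2

lemma avoid2 {V : Type} (G : SimpleGraph V) (h : StronglySelfEmbeddable G) (u v : V) :
    ∃ g : G →g G, Function.Injective g ∧ ∀ x, g x ≠ u ∧ g x ≠ v := by
  obtain ⟨g₁, hg₁, hav₁⟩ := avoid1 G h u
  by_cases hv : ∃ w, g₁ w = v
  · obtain ⟨w, hw⟩ := hv
    obtain ⟨g₂, hg₂, hav₂⟩ := avoid1 G h w
    refine ⟨g₁.comp g₂, hg₁.comp hg₂, fun x => ⟨hav₁ _, ?_⟩⟩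
    intro hx
    exact hav₂ x (hg₁ (hx.trans hw.symm))
  · exact ⟨g₁, hg₁, fun x => ⟨hav₁ x, fun hx => hv ⟨x, hx⟩⟩⟩

/-- If `G` is strongly self-embeddable then `G → (G, nK₂)` for every `n ≥ 1`. -/
theorem stmt15 {V : Type} (G : SimpleGraph V) (h : StronglySelfEmbeddable G)
    (n : ℕ) (hn : 1 ≤ n) :
    Arrows G G (Matching n) := by
  clear hn
  induction n with
  | zero =>
    intro c
    right
    exact ⟨⟨fun a => a.1.elim0, fun {a} => a.1.elim0⟩, fun a => a.1.elim0⟩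
  | succ n ih =>
    intro c
    by_cases hb : ∃ u v, G.Adj u v ∧ c s(u, v) = false
    · obtain ⟨u, v, huv, hcuv⟩ := hb
      obtain ⟨g, hg, hgav⟩ := avoid2 G h u v
      rcases ih (fun e => c (Sym2.map g e)) with ⟨m, hm⟩ | ⟨m, hm⟩
      · left
        refine ⟨⟨fun x => g (m x), fun {a b} hab => ?_⟩, hg.comp hm⟩
        have h2 : G.Adj (m a) (m b) ∧ c (Sym2.map g s(m a, m b)) = true := m.map_adj hab
        exact ⟨g.map_adj h2.1, by simpa using h2.2⟩
      · right
        let F : Fin (n + 1) × Fin 2 → V := fun p =>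
          if hi : (p.1 : ℕ) < n then g (m (⟨p.1, hi⟩, p.2)) else if p.2 = 0 then u else v
        refine ⟨⟨F, fun {a b} hab => ?_⟩, ?_⟩
        · obtain ⟨h1, h2⟩ : a.1 = b.1 ∧ a.2 ≠ b.2 := hab
          by_cases hi : (a.1 : ℕ) < n
          · have hib : (b.1 : ℕ) < n := h1 ▸ hi
            have hadj : (Matching n).Adj (⟨a.1, hi⟩, a.2) (⟨b.1, hib⟩, b.2) :=
              ⟨by simpa using congrArg Fin.val h1, h2⟩
            have h3 : G.Adj (m _) (m _) ∧ c (Sym2.map g s(m (⟨a.1, hi⟩, a.2), m (⟨b.1, hib⟩, b.2))) = false := m.map_adj hadj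
            show (colorSubgraph G c false).Adj (F a) (F b)
            simp only [F, dif_pos hi, dif_pos hib]
            exact ⟨g.map_adj h3.1, by simpa using h3.2⟩
          · have hib : ¬ (b.1 : ℕ) < n := h1 ▸ hi
            show (colorSubgraph G c false).Adj (F a) (F b)
            simp only [F, dif_neg hi, dif_neg hib]
            have ha2 : a.2 = 0 ∨ a.2 = 1 := by omega
            have hb2 : b.2 = 0 ∨ b.2 = 1 := by omega
            rcases ha2 with ha2 | ha2 <;> rcases hb2 with hb2 | hb2 <;>
              simp_all <;>
              first
                | exact ⟨huv, hcuv⟩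
                | exact ⟨huv.symm, by rwa [Sym2.eq_swap]⟩
        · intro a b hab
          have hab : F a = F b := hab
          simp only [F] at hab
          by_cases hia : (a.1 : ℕ) < n <;> by_cases hib : (b.1 : ℕ) < n
          · rw [dif_pos hia, dif_pos hib] at hab
            have := hm (hg hab)
            have h1 := congrArg (fun p => (p.1 : Fin n).val) this
            have h2 := congrArg Prod.snd this
            simp at h1 h2
            exact Prod.ext (Fin.ext h1) h2
          · exfalso
            rw [dif_pos hia, dif_neg hib] at hab
            split_ifs at hab
            · exact (hgav _).1 hab
            · exact (hgav _).2 hab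
          · exfalso
            rw [dif_neg hia, dif_pos hib] at hab
            split_ifs at hab
            · exact (hgav _).1 hab.symm
            · exact (hgav _).2 hab.symm
          · rw [dif_neg hia, dif_neg hib] at hab
            have ha1 : (a.1 : ℕ) = n := by omega
            have hb1 : (b.1 : ℕ) = n := by omega
            have h12 : a.1 = b.1 := Fin.ext (ha1.trans hb1.symm)
            have h22 : a.2 = b.2 := by
              by_contra hne
              split_ifs at hab with h1 h2 h2
              · exact hne (h1.trans h2.symm)
              · exact G.ne_of_adj huv hab
              · exact G.ne_of_adj huv hab.symm
              · have ha2 : a.2 = 1 := by omega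
                have hb2 : b.2 = 1 := by omega
                exact hne (ha2.trans hb2.symm)
            exact Prod.ext h12 h22
    · left
      refine ⟨⟨fun x => x, fun {x y} hxy => ⟨hxy, ?_⟩⟩, fun a b hab => hab⟩
      cases hc : c s(x, y) with
      | true => rfl
      | false => exact absurd ⟨x, y, hxy, hc⟩ hb
end

section
/- If G is strongly self-embeddable, then for every n ≥ 2 there is no (G, nK₂)-minimal graph. -/
open SimpleGraph

/-- Key lemma: if `G` is strongly self-embeddable and `F` arrows `(G, H)`, then deleting
any single edge from `F` still yields a graph that arrows `(G, H)`. -/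
lemma arrows_deleteEdge {V W γ : Type} (G : SimpleGraph V) (h : StronglySelfEmbeddable G)
    {H : SimpleGraph γ} {F : SimpleGraph W} (hF : Arrows F G H) {a b : W} (hab : F.Adj a b) :
    Arrows (F.deleteEdges {s(a, b)}) G H := by
  classical
  intro c
  rcases hF (fun s => if s = s(a, b) then true else c s) with ⟨f, hf⟩ | ⟨f, hf⟩
  · -- red copy of G in F under c₂
    by_cases hx : ∃ x y, G.Adj x y ∧ s(f x, f y) = s(a, b)
    · obtain ⟨x, y, hxy, hsxy⟩ := hx
      obtain ⟨ψ, hψ⟩ := h x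
      left
      refine ⟨⟨fun z => f (ψ z).val, ?_⟩, ?_⟩
      · intro z w hzw
        have hz : ((ψ z : { v // v ∈ ({x}ᶜ : Set V) }) : V) ≠ x := (ψ z).2
        have hw : ((ψ w : { v // v ∈ ({x}ᶜ : Set V) }) : V) ≠ x := (ψ w).2
        have hadj : G.Adj (ψ z).val (ψ w).val := ψ.map_rel hzw
        have hfa := f.map_rel hadj
        have hne : s(f (ψ z).val, f (ψ w).val) ≠ s(a, b) := by
          intro heq
          rw [Sym2.eq_iff] at heq hsxy
          rcases hsxy with ⟨ha1, hb1⟩ | ⟨ha1, hb1⟩ <;>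
            rcases heq with ⟨ha2, hb2⟩ | ⟨ha2, hb2⟩
          · exact hz (hf (ha2.trans ha1.symm))
          · exact hw (hf (hb2.trans ha1.symm))
          · exact hw (hf (hb2.trans ha1.symm))
          · exact hz (hf (ha2.trans ha1.symm))
        have h2 := hfa.2
        simp only [if_neg hne] at h2
        refine ⟨?_, h2⟩
        rw [SimpleGraph.deleteEdges_adj]
        exact ⟨hfa.1, by simpa using hne⟩
      · intro z w hzw
        exact (Subtype.val_injective.comp hψ) (hf hzw)
    · push_neg at hx
      left
      refine ⟨⟨f, ?_⟩, hf⟩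
      intro z w hzw
      have hfa := f.map_rel hzw
      have hne := hx z w hzw
      have h2 := hfa.2
      simp only [if_neg hne] at h2
      refine ⟨?_, h2⟩
      rw [SimpleGraph.deleteEdges_adj]
      exact ⟨hfa.1, by simpa using hne⟩
  · -- blue copy of H
    right
    refine ⟨⟨f, ?_⟩, hf⟩
    intro z w hzw
    have hfa := f.map_rel hzw
    have h2 := hfa.2
    have hne : s(f z, f w) ≠ s(a, b) := by
      intro heq
      simp only [if_pos heq] at h2
      simp at h2
    simp only [if_neg hne] at h2
    refine ⟨?_, h2⟩
    rw [SimpleGraph.deleteEdges_adj]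
    exact ⟨hfa.1, by simpa using hne⟩

/-- If `G` is strongly self-embeddable, then for every `n ≥ 2` there is no
`(G, nK₂)`-minimal graph. -/
theorem stmt16 {V : Type} [Nonempty V] (G : SimpleGraph V) (hni : NoIsolated G)
    (h : StronglySelfEmbeddable G) (n : ℕ) (hn : 2 ≤ n) :
    ∀ (W : Type) (F : SimpleGraph W), ¬ RamseyMinimal F G (Matching n) := by
  intro W F ⟨hA, hmin⟩
  by_cases he : ∃ a b, F.Adj a b
  · obtain ⟨a, b, hab⟩ := he
    refine hmin (F.deleteEdges {s(a, b)}) ?_ (arrows_deleteEdge G h hA hab)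
    constructor
    · exact SimpleGraph.deleteEdges_le _
    · intro hle
      have := hle a b hab
      rw [SimpleGraph.deleteEdges_adj] at this
      simp at this
  · push_neg at he
    rcases hA (fun _ => true) with ⟨f, hf⟩ | ⟨f, hf⟩
    · obtain ⟨v⟩ := ‹Nonempty V›
      obtain ⟨w, hvw⟩ := hni v
      exact he _ _ (f.map_rel hvw).1
    · have h2 : (Matching n).Adj (⟨0, by omega⟩, 0) (⟨0, by omega⟩, 1) := by
        constructor
        · rfl
        · simp [Fin.ext_iff]
      exact he _ _ (f.map_rel h2).1
end

section
/- For every n ≥ 1, there is no (S_∞, nK₂)-minimal graph, where S_∞ is the infinite star and nK₂ is a matching of n edges. -/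
open SimpleGraph

/-- Greedy selection: from finitely many infinite sets, pick distinct elements avoiding a
finite set. -/
lemma greedy {W : Type} : ∀ (m : ℕ) (B : Fin m → Set W), (∀ i, (B i).Infinite) →
    ∀ (A : Set W), A.Finite →
    ∃ w : Fin m → W, Function.Injective w ∧ (∀ i, w i ∈ B i) ∧ ∀ i, w i ∉ A := by
  intro m
  induction m with
  | zero =>
    intro B _ A _
    exact ⟨fun i => i.elim0, fun i => i.elim0, fun i => i.elim0, fun i => i.elim0⟩
  | succ m ih =>
    intro B hB A hA
    obtain ⟨w', hw'inj, hw'B, hw'A⟩ := ih (fun i => B i.succ) (fun i => hB i.succ) A hA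
    have hinf : (B 0 \ (A ∪ Set.range w')).Infinite :=
      (hB 0).diff (hA.union (Set.finite_range w'))
    obtain ⟨x, hx⟩ := hinf.nonempty
    have hxB : x ∈ B 0 := hx.1
    have hxA : x ∉ A := fun h => hx.2 (Or.inl h)
    have hxR : x ∉ Set.range w' := fun h => hx.2 (Or.inr h)
    refine ⟨Fin.cases x w', ?_, ?_, ?_⟩
    · intro i j hij
      induction i using Fin.cases with
      | zero =>
        induction j using Fin.cases with
        | zero => rfl
        | succ j =>
          simp only [Fin.cases_zero, Fin.cases_succ] at hij
          exact absurd ⟨j, hij.symm⟩ hxR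
      | succ i =>
        induction j using Fin.cases with
        | zero =>
          simp only [Fin.cases_zero, Fin.cases_succ] at hij
          exact absurd ⟨i, hij⟩ hxR
        | succ j =>
          simp only [Fin.cases_succ] at hij
          exact congrArg Fin.succ (hw'inj hij)
    · intro i
      induction i using Fin.cases with
      | zero => simpa using hxB
      | succ i => simpa using hw'B i
    · intro i
      induction i using Fin.cases with
      | zero => simpa using hxA
      | succ i => simpa using hw'A i

/-- If `F` has `n` distinct vertices of infinite degree, then `F → (S_∞, nK₂)`. -/
lemma arrows_of_infdeg {W : Type} (n : ℕ) (F : SimpleGraph W) (v : Fin n → W)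
    (hv : Function.Injective v) (hinf : ∀ i, (F.neighborSet (v i)).Infinite) :
    Arrows F InfStar (Matching n) := by
  classical
  intro c
  by_cases hred : ∃ i, {w | F.Adj (v i) w ∧ c s(v i, w) = true}.Infinite
  · -- red infinite star
    obtain ⟨i, hi⟩ := hred
    left
    set g := Set.Infinite.natEmbedding _ hi with hg
    refine ⟨⟨fun a => a.elim (v i) (fun k => (g k : W)), ?_⟩, ?_⟩
    · intro a b hab
      rw [InfStar, SimpleGraph.fromRel_adj] at hab
      obtain ⟨hne, hor⟩ := hab
      rcases hor with h | h
      · subst h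
        obtain ⟨k, rfl⟩ := Option.ne_none_iff_exists'.mp (Ne.symm hne)
        exact ⟨(g k).2.1, (g k).2.2⟩
      · subst h
        obtain ⟨k, rfl⟩ := Option.ne_none_iff_exists'.mp hne
        have h1 : F.Adj (v i) (g k) := (g k).2.1
        have h2 : c s(v i, (g k : W)) = true := (g k).2.2
        exact ⟨h1.symm, by rwa [Sym2.eq_swap]⟩
    · intro a b hab
      match a, b with
      | none, none => rfl
      | none, some k =>
        exfalso
        have : F.Adj (v i) (g k) := (g k).2.1
        exact this.ne (by simpa using hab)
      | some k, none =>
        exfalso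
        have : F.Adj (v i) (g k) := (g k).2.1
        exact this.ne (by simpa using hab.symm)
      | some k, some l =>
        have : (g k : W) = (g l : W) := by simpa using hab
        exact congrArg some (g.injective (Subtype.val_injective this))
  · -- blue matching
    push_neg at hred
    right
    have hblue : ∀ i, {w | F.Adj (v i) w ∧ c s(v i, w) = false}.Infinite := by
      intro i
      by_contra hfin
      rw [Set.not_infinite] at hfin
      have hcov : F.neighborSet (v i) ⊆
          {w | F.Adj (v i) w ∧ c s(v i, w) = true} ∪
          {w | F.Adj (v i) w ∧ c s(v i, w) = false} := by
        intro w hw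
        rcases Bool.eq_false_or_eq_true (c s(v i, w)) with h | h
        · exact Or.inl ⟨hw, h⟩
        · exact Or.inr ⟨hw, h⟩

      have : (F.neighborSet (v i)).Finite :=
        Set.Finite.subset ((hred i).union hfin) hcov
      exact (hinf i) this
    obtain ⟨w, hwinj, hwB, hwA⟩ := greedy n _ hblue (Set.range v) (Set.finite_range v)
    refine ⟨⟨fun p => if p.2 = (0 : Fin 2) then v p.1 else w p.1, ?_⟩, ?_⟩
    · rintro ⟨i, a⟩ ⟨j, b⟩ ⟨hij, hab⟩
      dsimp only at hij
      subst hij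
      have hadj : (colorSubgraph F c false).Adj (v i) (w i) := ⟨(hwB i).1, (hwB i).2⟩
      fin_cases a <;> fin_cases b <;> simp_all <;> exact hadj.symm
    · rintro ⟨i, a⟩ ⟨j, b⟩ hab
      have hvw : ∀ p q, v p ≠ w q := fun p q h => (hwA q) ⟨p, h⟩
      fin_cases a <;> fin_cases b <;> simp_all
      · exact hv hab
      · exact hvw j i hab.symm
      · exact hwinj hab

/-- Conversely, an arrowing graph has `n` distinct vertices of infinite degree. -/
lemma infdeg_of_arrows {W : Type} (n : ℕ) (F : SimpleGraph W)
    (h : Arrows F InfStar (Matching n)) :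
    ∃ v : Fin n → W, Function.Injective v ∧ ∀ i, (F.neighborSet (v i)).Infinite := by
  classical
  set I : Set W := {v : W | (F.neighborSet v).Infinite} with hI
  set c : Sym2 W → Bool := fun e => decide (∀ x ∈ e, x ∉ I) with hc
  rcases h c with ⟨⟨f, hf⟩, hfinj⟩ | ⟨⟨g, hg⟩, hginj⟩
  · -- red star impossible
    exfalso
    have hadj : ∀ k : ℕ, (colorSubgraph F c true).Adj (f none) (f (some k)) := by
      intro k
      apply hf
      rw [InfStar, SimpleGraph.fromRel_adj]
      exact ⟨by simp, Or.inl rfl⟩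
    have hmem : f none ∉ I := by
      have h0 := (hadj 0).2
      rw [hc] at h0
      have := of_decide_eq_true h0
      exact this (f none) (Sym2.mem_mk_left _ _)
    apply hmem
    have hsub : Set.range (fun k : ℕ => f (some k)) ⊆ F.neighborSet (f none) := by
      rintro _ ⟨k, rfl⟩
      exact (hadj k).1
    exact Set.Infinite.mono hsub
      (Set.infinite_range_of_injective (fun a b hab => Option.some_injective _ (hfinj hab)))
  · -- blue matching gives the vertices
    have hx : ∀ i : Fin n, ∃ x, (x = g (i, 0) ∨ x = g (i, 1)) ∧ x ∈ I := by
      intro i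
      have hadj : (colorSubgraph F c false).Adj (g (i, 0)) (g (i, 1)) := by
        have hadj : (Matching n).Adj (i, 0) (i, 1) := ⟨rfl, fun h => Fin.zero_ne_one h⟩
        exact hg hadj
      have h0 := hadj.2
      rw [hc] at h0
      have := of_decide_eq_false h0
      push_neg at this
      obtain ⟨x, hxm, hxI⟩ := this
      rw [Sym2.mem_iff] at hxm
      exact ⟨x, hxm, hxI⟩
    choose v hv1 hv2 using hx
    refine ⟨v, ?_, hv2⟩
    intro i j hij
    rcases hv1 i with h1 | h1 <;> rcases hv1 j with h2 | h2 <;>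
    · have := hginj (h1.symm.trans (hij.trans h2))
      exact congrArg Prod.fst this

/-- For every `n ≥ 1` there is no `(S_∞, nK₂)`-minimal graph. -/
theorem stmt19 (n : ℕ) (hn : 1 ≤ n) (W : Type) [Countable W] (F : SimpleGraph W) :
    ¬ RamseyMinimal F InfStar (Matching n) := by
  rintro ⟨hA, hmin⟩
  obtain ⟨v, hv, hinf⟩ := infdeg_of_arrows n F hA
  have i0 : Fin n := ⟨0, hn⟩
  obtain ⟨u, hu⟩ := (hinf i0).nonempty
  rw [SimpleGraph.mem_neighborSet] at hu
  set F' := F.deleteEdges {s(v i0, u)} with hF'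
  have hle : F' ≤ F := SimpleGraph.deleteEdges_le _
  have hne : ¬ F'.Adj (v i0) u := by
    rw [hF', SimpleGraph.deleteEdges_adj]
    simp
  have hlt : F' < F := by
    refine lt_of_le_of_ne hle ?_
    intro h
    rw [h] at hne
    exact hne hu
  refine hmin F' hlt (arrows_of_infdeg n F' v hv ?_)
  intro i
  have hsub : F.neighborSet (v i) \ {u, v i0} ⊆ F'.neighborSet (v i) := by
    rintro y ⟨hy, hy2⟩
    rw [Set.mem_insert_iff, Set.mem_singleton_iff] at hy2
    push_neg at hy2
    rw [SimpleGraph.mem_neighborSet] at hy ⊢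
    rw [hF', SimpleGraph.deleteEdges_adj]
    refine ⟨hy, ?_⟩
    rw [Set.mem_singleton_iff, Sym2.eq_iff]
    rintro (⟨h1, h2⟩ | ⟨h1, h2⟩)
    · exact hy2.1 h2
    · exact hy2.2 h2
  exact Set.Infinite.mono hsub ((hinf i).diff ((Set.finite_singleton _).insert u))
end
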